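/- If S is a finite set of points in a bounded domain Ω ⊂ ℝⁿ, then S satisfies the outward ball property: for every nonempty relatively closed set T ⊂ Ω with T ≠ Ω, there exist R > 0 and x₀ ∈ Ω \ (T ∪ S) such that the open ball B_R(x₀) is contained in Ω \ (T ∪ S) and the sphere ∂B_R(x₀) meets T. -/

import Mathlib

open Metric Set

/-- A set `S ⊆ Ω` satisfies the *outward ball property* if for every nonempty
relatively closed strict subset `T` of `Ω` there exist `R > 0` and
`x₀ ∈ Ω \ (T ∪ S)` with `B_R(x₀) ⊆ Ω \ (T ∪ S)` and `∂B_R(x₀) ∩ T ≠ ∅`. -/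
def OutwardBallProperty {n : ℕ} (Ω S : Set (EuclideanSpace ℝ (Fin n))) : Prop :=
  ∀ T : Set (EuclideanSpace ℝ (Fin n)), T.Nonempty → T ⊆ Ω → T ≠ Ω →
    (∃ C : Set (EuclideanSpace ℝ (Fin n)), IsClosed C ∧ T = C ∩ Ω) →
    ∃ R : ℝ, 0 < R ∧ ∃ x₀ ∈ Ω \ (T ∪ S),
      Metric.ball x₀ R ⊆ Ω \ (T ∪ S) ∧ (Metric.sphere x₀ R ∩ T).Nonempty

theorem stmt0 {n : ℕ} (Ω S : Set (EuclideanSpace ℝ (Fin n)))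
    (hΩo : IsOpen Ω) (hΩc : IsConnected Ω) (hΩb : Bornology.IsBounded Ω)
    (hSfin : S.Finite) (hSΩ : S ⊆ Ω) :
    OutwardBallProperty Ω S := by
  intro T hTne hTΩ hTneq hTrc
  obtain ⟨C, hC, hTC⟩ := hTrc
  have hTsubC : T ⊆ C := by rw [hTC]; exact inter_subset_left
  -- Ω \ T is nonempty
  obtain ⟨w, hwΩ, hwT⟩ : (Ω \ T).Nonempty := by
    rw [Set.diff_nonempty]
    intro h
    exact hTneq (le_antisymm hTΩ h)
  -- There is a point of T touching Ω \ T
  have key : ∃ t ∈ T, ∀ ε > 0, ∃ y ∈ Ω \ T, dist y t < ε := by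
    by_contra h
    push_neg at h
    choose ε hεpos hε using h
    set U : Set (EuclideanSpace ℝ (Fin n)) :=
      ⋃ (t : EuclideanSpace ℝ (Fin n)) (ht : t ∈ T), ball t (ε t ht) with hU
    have hUopen : IsOpen U := isOpen_iUnion fun t => isOpen_iUnion fun ht => isOpen_ball
    have := hΩc.isPreconnected U Cᶜ hUopen hC.isOpen_compl
      (by
        intro x hx
        by_cases hxC : x ∈ C
        · have hxT : x ∈ T := by rw [hTC]; exact ⟨hxC, hx⟩
          exact Or.inl (mem_iUnion.2 ⟨x, mem_iUnion.2 ⟨hxT, mem_ball_self (hεpos x hxT)⟩⟩)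
        · exact Or.inr hxC)
      (by
        obtain ⟨t, ht⟩ := hTne
        exact ⟨t, hTΩ ht, mem_iUnion.2 ⟨t, mem_iUnion.2 ⟨ht, mem_ball_self (hεpos t ht)⟩⟩⟩)
      (by
        refine ⟨w, hwΩ, fun hwC => hwT ?_⟩
        rw [hTC]; exact ⟨hwC, hwΩ⟩)
    obtain ⟨x, hxΩ, hxU, hxC⟩ := this
    obtain ⟨t, ht, hxball⟩ := by
      simpa only [hU, mem_iUnion] using hxU
    have hxT : x ∉ T := fun hxT => hxC (hTsubC hxT)
    exact absurd (mem_ball.1 hxball) (not_lt.2 (hε t ht x ⟨hxΩ, hxT⟩))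
  obtain ⟨t, htT, hkey⟩ := key
  -- radius around t inside Ω
  obtain ⟨r₀, hr₀pos, hr₀⟩ := Metric.isOpen_iff.1 hΩo t (hTΩ htT)
  set r : ℝ := r₀ / 2 with hr
  have hrpos : 0 < r := by positivity
  obtain ⟨y, ⟨hyΩ, hyT⟩, hyt⟩ := hkey r hrpos
  set d : ℝ := infDist y T with hd
  have hdle : d ≤ dist y t := infDist_le_dist_of_mem htT
  have hdlt : d < r := lt_of_le_of_lt hdle hyt
  have hdpos : 0 < d := by
    rw [hd, ← infDist_closure]
    rw [← isClosed_closure.notMem_iff_infDist_pos hTne.closure]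
    intro hy
    have hyC : y ∈ C := closure_minimal hTsubC hC hy
    exact hyT (by rw [hTC]; exact ⟨hyC, hyΩ⟩)
  -- closest point z in T
  obtain ⟨z, hzcl, hzd⟩ := Metric.exists_mem_closure_infDist_eq_dist hTne y
  rw [← hd] at hzd
  have hzy : dist y z = d := hzd.symm
  have hzΩ : z ∈ Ω := by
    apply hr₀
    have : dist z t ≤ dist z y + dist y t := dist_triangle z y t
    have h2 : dist z y = d := by rw [dist_comm]; exact hzy
    rw [mem_ball]
    calc dist z t ≤ dist z y + dist y t := dist_triangle z y t
      _ < r + r := by rw [h2]; exact add_lt_add hdlt hyt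
      _ = r₀ := by rw [hr]; ring
  have hzT : z ∈ T := by
    rw [hTC]
    exact ⟨closure_minimal hTsubC hC hzcl, hzΩ⟩
  -- ball y d ⊆ Ω \ T
  have hballyd : ball y d ⊆ Ω \ T := by
    intro v hv
    constructor
    · apply hr₀
      rw [mem_ball]
      calc dist v t ≤ dist v y + dist y t := dist_triangle v y t
        _ < d + r := add_lt_add (mem_ball.1 hv) hyt
        _ ≤ r + r := by linarith
        _ = r₀ := by rw [hr]; ring
    · intro hvT
      exact absurd (mem_ball.1 hv) (not_lt.2 (by rw [dist_comm]; exact infDist_le_dist_of_mem hvT))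
  -- avoid S near z
  have hSz : IsClosed (S \ {z}) := (hSfin.diff : (S \ {z}).Finite).isClosed
  have hzmem : z ∈ (S \ {z})ᶜ := fun h => h.2 rfl
  obtain ⟨ε, hεpos, hεball⟩ := Metric.isOpen_iff.1 hSz.isOpen_compl z hzmem
  set s : ℝ := min (d / 2) (ε / 2) with hs
  have hspos : 0 < s := lt_min (by positivity) (by positivity)
  have hsd : s ≤ d / 2 := min_le_left _ _
  have hsε : s ≤ ε / 2 := min_le_right _ _
  have hsled : s ≤ d := le_trans hsd (by linarith)
  set x₀ : EuclideanSpace ℝ (Fin n) := z + (s / d) • (y - z) with hx₀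
  have hnormyz : ‖y - z‖ = d := by rw [← dist_eq_norm]; exact hzy
  have hx₀z : dist x₀ z = s := by
    rw [dist_eq_norm, hx₀]
    have : z + (s / d) • (y - z) - z = (s / d) • (y - z) := by abel
    rw [this, norm_smul, hnormyz, Real.norm_eq_abs, abs_of_pos (by positivity)]
    field_simp
  have hx₀y : dist x₀ y = d - s := by
    rw [dist_eq_norm, hx₀]
    have : z + (s / d) • (y - z) - y = -((1 - s / d) • (y - z)) := by
      rw [sub_smul, one_smul]
      module
    rw [this, norm_neg, norm_smul, hnormyz, Real.norm_eq_abs,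
      abs_of_nonneg (by
        have : s / d ≤ 1 := (div_le_one hdpos).2 hsled
        linarith)]
    field_simp
  -- the ball around x₀
  have hball : ball x₀ s ⊆ Ω \ (T ∪ S) := by
    intro v hv
    have hvy : v ∈ ball y d := by
      rw [mem_ball]
      calc dist v y ≤ dist v x₀ + dist x₀ y := dist_triangle v x₀ y
        _ < s + (d - s) := add_lt_add_of_lt_of_le (mem_ball.1 hv) (le_of_eq hx₀y)
        _ = d := by ring
    have hvΩT := hballyd hvy
    refine ⟨hvΩT.1, ?_⟩
    rintro (hvT | hvS)
    · exact hvΩT.2 hvT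
    · have hvz : dist v z < ε := by
        calc dist v z ≤ dist v x₀ + dist x₀ z := dist_triangle v x₀ z
          _ < s + s := add_lt_add_of_lt_of_le (mem_ball.1 hv) (le_of_eq hx₀z)
          _ ≤ ε := by linarith
      have := hεball (mem_ball.2 hvz)
      simp only [mem_compl_iff, mem_diff, mem_singleton_iff, not_and, not_not] at this
      have hvzeq := this hvS
      subst hvzeq
      exact hvΩT.2 hzT
  refine ⟨s, hspos, x₀, hball (mem_ball_self hspos), hball, ⟨z, ?_, hzT⟩⟩
  rw [mem_sphere, dist_comm]
  exact hx₀z
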